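/- Let (M,g,J,∇,ξ) be a conical affine special Kähler manifold. Then the Riemann curvature tensor R of the Levi-Civita connection satisfies R(ξ,·)· = R(·,ξ)· = R(·,·)ξ = 0 and R(Jξ,·)· = R(·,Jξ)· = R(·,·)Jξ = 0. -/

import Mathlib

universe u v

/-- Abstract calculus of vector fields on a manifold: `F` models the ring of smooth
functions (an `ℝ`-algebra), `X` the `F`-module of vector fields, with Lie bracket
`br` and the action `act` of vector fields on functions as derivations. -/
structure VFCalc (F : Type u) (X : Type v) [CommRing F] [Algebra ℝ F]
    [AddCommGroup X] [Module F X] where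
  br : X → X → X
  act : X → F → F
  act_add : ∀ v f g, act v (f + g) = act v f + act v g
  act_mul : ∀ v f g, act v (f * g) = f * act v g + g * act v f
  act_const : ∀ v (r : ℝ), act v (algebraMap ℝ F r) = 0
  act_addl : ∀ v w f, act (v + w) f = act v f + act w f
  act_smull : ∀ (h : F) v f, act (h • v) f = h * act v f
  br_antisymm : ∀ v w, br v w = -br w v
  br_jacobi : ∀ u v w, br u (br v w) + br v (br w u) + br w (br u v) = 0
  act_br : ∀ v w f, act (br v w) f = act v (act w f) - act w (act v f)

/-- An affine special (pseudo-)Kähler manifold, modelled abstractly: a pseudo-Kähler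
structure `(g, J, ω = g(J·,·))` together with a flat torsion-free connection `conn = ∇`
satisfying `∇ω = 0` and `d^∇ J = 0`. -/
structure ASK (F : Type u) (X : Type v) [CommRing F] [Algebra ℝ F]
    [AddCommGroup X] [Module F X] extends VFCalc F X where
  g : X → X → F
  J : X → X
  conn : X → X → X
  g_symm : ∀ v w, g v w = g w v
  g_addl : ∀ u v w, g (u + v) w = g u w + g v w
  g_smull : ∀ (f : F) v w, g (f • v) w = f * g v w
  g_nondeg : ∀ v, (∀ w, g v w = 0) → v = 0
  J_add : ∀ v w, J (v + w) = J v + J w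
  J_smul : ∀ (f : F) v, J (f • v) = f • J v
  J_sq : ∀ v, J (J v) = -v
  g_hermitian : ∀ v w, g (J v) (J w) = g v w
  conn_addl : ∀ u v w, conn (u + v) w = conn u w + conn v w
  conn_smull : ∀ (f : F) v w, conn (f • v) w = f • conn v w
  conn_addr : ∀ u v w, conn u (v + w) = conn u v + conn u w
  conn_leibniz : ∀ u (f : F) v, conn u (f • v) = act u f • v + f • conn u v
  torsion_free : ∀ v w, conn v w - conn w v = br v w
  flat : ∀ u v w, conn u (conn v w) - conn v (conn u w) - conn (br u v) w = 0
  dconnJ : ∀ v w, conn v (J w) - J (conn v w) = conn w (J v) - J (conn w v)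
  conn_omega : ∀ u v w,
    act u (g (J v) w) - g (J (conn u v)) w - g (J v) (conn u w) = 0

namespace ASK

variable {F : Type u} {X : Type v} [CommRing F] [Algebra ℝ F]
  [AddCommGroup X] [Module F X]

/-- The covariant derivative `(∇_u g)(v, w)` of the metric. -/
def covg (A : ASK F X) (u v w : X) : F :=
  A.act u (A.g v w) - A.g (A.conn u v) w - A.g v (A.conn u w)

/-- The second covariant derivative `(∇²_{u,v} g)(z, w)`. -/
def covg2 (A : ASK F X) (u v z w : X) : F :=
  A.act u (A.covg v z w) - A.covg (A.conn u v) z w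
    - A.covg v (A.conn u z) w - A.covg v z (A.conn u w)

end ASK

/-- A conical affine special Kähler (CASK) manifold: an ASK manifold together with
its Levi-Civita connection `lc = D` and a vector field `xi = ξ` satisfying
`D ξ = ∇ ξ = id`. -/
structure CASK (F : Type u) (X : Type v) [CommRing F] [Algebra ℝ F]
    [AddCommGroup X] [Module F X] extends ASK F X where
  lc : X → X → X
  lc_metric : ∀ u v w, act u (g v w) = g (lc u v) w + g v (lc u w)
  lc_torsion_free : ∀ v w, lc v w - lc w v = br v w
  xi : X
  lc_xi : ∀ v, lc v xi = v
  conn_xi : ∀ v, conn v xi = v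


namespace CASK

variable {F : Type u} {X : Type v} [CommRing F] [Algebra ℝ F]
  [AddCommGroup X] [Module F X] (C : CASK F X)

/-! ### Elementary consequences -/

lemma act_zero (v : X) : C.act v (0 : F) = 0 := by
  have h := C.act_const v 0
  simpa using h

lemma act_neg (v : X) (f : F) : C.act v (-f) = -C.act v f := by
  have h := C.act_add v f (-f)
  rw [add_neg_cancel, act_zero] at h
  linear_combination -h

lemma g_zerol (w : X) : C.g 0 w = 0 := by
  have h := C.g_addl 0 0 w
  rw [add_zero] at h
  linear_combination -h

lemma g_negl (v w : X) : C.g (-v) w = -C.g v w := by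
  have h := C.g_addl v (-v) w
  rw [add_neg_cancel, g_zerol] at h
  linear_combination -h

lemma g_subl (u v w : X) : C.g (u - v) w = C.g u w - C.g v w := by
  rw [sub_eq_add_neg, C.g_addl, g_negl, sub_eq_add_neg]

lemma g_addr (u v w : X) : C.g u (v + w) = C.g u v + C.g u w := by
  rw [C.g_symm, C.g_addl, C.g_symm v u, C.g_symm w u]

lemma g_negr (u v : X) : C.g u (-v) = -C.g u v := by
  rw [C.g_symm, g_negl, C.g_symm]

lemma g_subr (u v w : X) : C.g u (v - w) = C.g u v - C.g u w := by
  rw [sub_eq_add_neg, g_addr, g_negr, sub_eq_add_neg]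

lemma J_zero : C.J 0 = 0 := by
  have h := C.J_add 0 0
  rw [add_zero] at h
  exact left_eq_add.mp h

lemma J_neg (v : X) : C.J (-v) = -C.J v := by
  have h := C.J_add v (-v)
  rw [add_neg_cancel, J_zero] at h
  exact (neg_eq_of_add_eq_zero_right h.symm).symm

lemma J_sub (v w : X) : C.J (v - w) = C.J v - C.J w := by
  rw [sub_eq_add_neg, C.J_add, J_neg, sub_eq_add_neg]

lemma conn_zeror (u : X) : C.conn u 0 = 0 := by
  have h := C.conn_addr u 0 0
  rw [add_zero] at h
  exact left_eq_add.mp h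

lemma conn_negr (u v : X) : C.conn u (-v) = -C.conn u v := by
  have h := C.conn_addr u v (-v)
  rw [add_neg_cancel, conn_zeror] at h
  exact (neg_eq_of_add_eq_zero_right h.symm).symm

lemma conn_subr (u v w : X) : C.conn u (v - w) = C.conn u v - C.conn u w := by
  rw [sub_eq_add_neg, C.conn_addr, conn_negr, sub_eq_add_neg]

lemma br_eq (a b : X) : C.br a b = C.conn a b - C.conn b a :=
  (C.torsion_free a b).symm

lemma gJ_skew (a b : X) : C.g (C.J a) b = -C.g a (C.J b) := by
  have h := C.g_hermitian (C.J a) b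
  rw [C.J_sq] at h
  rw [← h, g_negl]

lemma half_F (f : F) (h : f + f = 0) : f = 0 := by
  have key : algebraMap ℝ F (1/2) * 2 = 1 := by
    rw [show (2:F) = algebraMap ℝ F 2 from (map_ofNat _ 2).symm, ← map_mul]
    norm_num
  calc f = algebraMap ℝ F (1/2) * (f + f) := by linear_combination (-f) * key
  _ = 0 := by rw [h, mul_zero]

set_option linter.unusedSectionVars false in
include C in
lemma half_X (x : X) (h : x + x = 0) : x = 0 := by
  have key : algebraMap ℝ F (1/2) * 2 = 1 := by
    rw [show (2:F) = algebraMap ℝ F 2 from (map_ofNat _ 2).symm, ← map_mul]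
    norm_num
  calc x = ((1:F)) • x := (one_smul F x).symm
  _ = (algebraMap ℝ F (1/2) * 2) • x := by rw [key]
  _ = algebraMap ℝ F (1/2) • ((2:F) • x) := by rw [mul_smul]
  _ = algebraMap ℝ F (1/2) • (x + x) := by rw [two_smul]
  _ = 0 := by rw [h, smul_zero]

lemma eq_of_g (a b : X) (h : ∀ w, C.g a w = C.g b w) : a = b := by
  have h0 : ∀ w, C.g (a - b) w = 0 := by
    intro w; rw [g_subl, h, sub_self]
  exact sub_eq_zero.mp (C.g_nondeg _ h0)

lemma eq_of_two_g (a b : X) (h : ∀ w, C.g a w + C.g a w = C.g b w + C.g b w) :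
    a = b := by
  apply eq_of_g C
  intro w
  have hf : (C.g a w - C.g b w) + (C.g a w - C.g b w) = 0 := by
    linear_combination h w
  have := half_F _ hf
  linear_combination this

end CASK

namespace CASK

variable {F : Type u} {X : Type v} [CommRing F] [Algebra ℝ F]
  [AddCommGroup X] [Module F X] (C : CASK F X)

/-- `P v w = (d^∇J)(v,w)`-type tensor: `∇_v (Jw) - J ∇_v w`. -/
def P (a b : X) : X := C.conn a (C.J b) - C.J (C.conn a b)

lemma P_symm (a b : X) : C.P a b = C.P b a := C.dconnJ a b

lemma connJ (a b : X) : C.conn a (C.J b) = C.J (C.conn a b) + C.P a b := by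
  rw [P]; abel

lemma P_J (a b : X) : C.P a (C.J b) = -C.J (C.P a b) := by
  rw [P, P, C.J_sq, conn_negr, connJ, C.J_add, C.J_sq, J_sub, C.J_add]
  abel

/-- Key expansion of the derivative of the metric along `∇`, using `∇ω = 0`. -/
lemma act_g (x a b : X) :
    C.act x (C.g a b)
      = C.g (C.conn x a) b + C.g a (C.conn x b) + C.g (C.J b) (C.P x a) := by
  have h := C.conn_omega x (C.J a) b
  rw [C.J_sq, connJ, C.J_add, C.J_sq] at h
  rw [g_negl, act_neg, C.g_addl, g_negl, g_negl] at h
  have hs : C.g (C.J (C.P x a)) b = -C.g (C.J b) (C.P x a) := by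
    rw [gJ_skew, C.g_symm]
  linear_combination -h - hs

lemma P_swap (x a b : X) : C.g (C.J b) (C.P x a) = C.g (C.J a) (C.P x b) := by
  have h1 := act_g C x a b
  have h2 := act_g C x b a
  rw [C.g_symm b a] at h2
  have e1 : C.g (C.conn x a) b = C.g b (C.conn x a) := C.g_symm _ _
  have e2 : C.g a (C.conn x b) = C.g (C.conn x b) a := C.g_symm _ _
  linear_combination h2 - h1 - e1 - e2

lemma P_inner (x a w : X) : C.g (C.P x a) w = C.g (C.P x w) a := by
  have h := P_swap C x a (C.J w)
  rw [C.J_sq, g_negl, P_J] at h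
  rw [g_negr, C.g_symm (C.J a) (C.J (C.P x w)), C.g_hermitian] at h
  have := neg_injective h
  rw [C.g_symm, this, C.g_symm]

/-- The Koszul expression. -/
def K (u v w : X) : F :=
  C.act u (C.g v w) + C.act v (C.g u w) - C.act w (C.g u v)
    + C.g (C.br u v) w - C.g (C.br u w) v - C.g (C.br v w) u

lemma koszul (u v w : X) : C.g (C.lc u v) w + C.g (C.lc u v) w = C.K u v w := by
  rw [K, ← C.lc_torsion_free, ← C.lc_torsion_free, ← C.lc_torsion_free,
    C.lc_metric, C.lc_metric, C.lc_metric, g_subl, g_subl, g_subl]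
  have e1 : C.g v (C.lc u w) = C.g (C.lc u w) v := C.g_symm _ _
  have e2 : C.g u (C.lc v w) = C.g (C.lc v w) u := C.g_symm _ _
  have e3 : C.g u (C.lc w v) = C.g (C.lc w v) u := C.g_symm _ _
  linear_combination -e1 - e2 + e3

lemma br_addr (u v v' : X) : C.br u (v + v') = C.br u v + C.br u v' := by
  rw [br_eq, br_eq, br_eq, C.conn_addr, C.conn_addl]; abel

lemma br_addl (u u' v : X) : C.br (u + u') v = C.br u v + C.br u' v := by
  rw [br_eq, br_eq, br_eq, C.conn_addl, C.conn_addr]; abel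

lemma K_addv (u v v' w : X) : C.K u (v + v') w = C.K u v w + C.K u v' w := by
  rw [K, K, K]
  simp only [C.g_addl, g_addr, C.act_add, C.act_addl, br_addl, br_addr]
  ring

lemma K_addu (u u' v w : X) : C.K (u + u') v w = C.K u v w + C.K u' v w := by
  rw [K, K, K]
  simp only [C.g_addl, g_addr, C.act_add, C.act_addl, br_addl, br_addr]
  ring

lemma lc_addr (u v v' : X) : C.lc u (v + v') = C.lc u v + C.lc u v' := by
  apply eq_of_two_g C
  intro w
  rw [koszul, K_addv, ← koszul, ← koszul, C.g_addl]
  ring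

lemma lc_addl (u u' v : X) : C.lc (u + u') v = C.lc u v + C.lc u' v := by
  apply eq_of_two_g C
  intro w
  rw [koszul, K_addu, ← koszul, ← koszul, C.g_addl]
  ring

lemma lc_zeror (u : X) : C.lc u 0 = 0 := by
  have h := lc_addr C u 0 0
  rw [add_zero] at h
  exact left_eq_add.mp h

lemma lc_negr (u v : X) : C.lc u (-v) = -C.lc u v := by
  have h := lc_addr C u v (-v)
  rw [add_neg_cancel, lc_zeror] at h
  exact (neg_eq_of_add_eq_zero_right h.symm).symm

lemma lc_negl (u v : X) : C.lc (-u) v = -C.lc u v := by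
  have h0 : C.lc 0 v = 0 := by
    have h := lc_addl C 0 0 v
    rw [add_zero] at h
    exact left_eq_add.mp h
  have h := lc_addl C u (-u) v
  rw [add_neg_cancel, h0] at h
  exact (neg_eq_of_add_eq_zero_right h.symm).symm

end CASK

namespace CASK

variable {F : Type u} {X : Type v} [CommRing F] [Algebra ℝ F]
  [AddCommGroup X] [Module F X] (C : CASK F X)

lemma gJPJ (x a b : X) : C.g (C.J a) (C.P x (C.J b)) = -C.g a (C.P x b) := by
  rw [P_J, g_negr, C.g_hermitian]

lemma g_connJ_l (a b c : X) :
    C.g (C.conn a (C.J b)) c = C.g (C.J (C.conn a b)) c + C.g (C.P a b) c := by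
  rw [connJ, C.g_addl]

lemma g_connJ_r (c a b : X) :
    C.g c (C.conn a (C.J b)) = C.g c (C.J (C.conn a b)) + C.g c (C.P a b) := by
  rw [connJ, g_addr]

lemma g_br (a b c : X) :
    C.g (C.br a b) c = C.g (C.conn a b) c - C.g (C.conn b a) c := by
  rw [br_eq, g_subl]

/-- The main Kähler identity: `K(u, Jv, w) + K(u, v, Jw) = 0`. -/
lemma K_J (u v w : X) : C.K u (C.J v) w + C.K u v (C.J w) = 0 := by
  have a1 := act_g C u (C.J v) w
  have a2 := act_g C (C.J v) u w
  have a3 := act_g C w u (C.J v)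
  have a4 := act_g C u v (C.J w)
  have a5 := act_g C v u (C.J w)
  have a6 := act_g C (C.J w) u v
  have b1 := g_br C u (C.J v) w
  have b2 := g_br C u w (C.J v)
  have b3 := g_br C (C.J v) w u
  have b4 := g_br C u v (C.J w)
  have b5 := g_br C u (C.J w) v
  have b6 := g_br C v (C.J w) u
  have c1 := g_connJ_l C u v w
  have c2 := g_connJ_l C w v u
  have c3 := g_connJ_r C u w v
  have c4 := g_connJ_l C u w v
  have c5 := g_connJ_r C v u w
  have c6 := g_connJ_l C v w u
  have c7 := g_connJ_r C u v w
  have p1 : C.g (C.J w) (C.P u (C.J v)) = -C.g w (C.P u v) := gJPJ C u w v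
  have p2 : C.g (C.J w) (C.P (C.J v) u) = -C.g w (C.P u v) := by
    rw [P_symm C (C.J v) u]; exact gJPJ C u w v
  have p3 : C.g (C.J (C.J v)) (C.P w u) = -C.g v (C.P u w) := by
    rw [C.J_sq, g_negl, P_symm C w u]
  have p4 : C.g (C.J (C.J w)) (C.P u v) = -C.g w (C.P u v) := by
    rw [C.J_sq, g_negl]
  have p5 : C.g (C.J (C.J w)) (C.P v u) = -C.g w (C.P u v) := by
    rw [C.J_sq, g_negl, P_symm C v u]
  have p6 : C.g (C.J v) (C.P (C.J w) u) = -C.g v (C.P u w) := by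
    rw [P_symm C (C.J w) u]; exact gJPJ C u v w
  have s1 : C.g u (C.conn (C.J v) w) = C.g (C.conn (C.J v) w) u := C.g_symm _ _
  have s2 : C.g (C.J v) (C.conn u w) = C.g (C.conn u w) (C.J v) := C.g_symm _ _
  have s3 : C.g u (C.conn (C.J w) v) = C.g (C.conn (C.J w) v) u := C.g_symm _ _
  have s4 : C.g u (C.J (C.conn w v)) = C.g (C.J (C.conn w v)) u := C.g_symm _ _
  have s5 : C.g v (C.J (C.conn u w)) = C.g (C.J (C.conn u w)) v := C.g_symm _ _
  have s6 : C.g u (C.J (C.conn v w)) = C.g (C.J (C.conn v w)) u := C.g_symm _ _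
  have s7 : C.g (C.P w v) u = C.g u (C.P w v) := C.g_symm _ _
  have s8 : C.g (C.P v w) u = C.g u (C.P v w) := C.g_symm _ _
  have s9 : C.g (C.P u v) w = C.g w (C.P u v) := C.g_symm _ _
  have s10 : C.g (C.P u w) v = C.g v (C.P u w) := C.g_symm _ _
  have k1 : C.g (C.J (C.conn u v)) w = -C.g (C.conn u v) (C.J w) := gJ_skew C _ _
  have q1 : C.g (C.P u v) w = C.g (C.P u w) v := P_inner C u v w
  rw [K, K]
  linear_combination a1 + a2 - a3 + a4 + a5 - a6 + b1 - b2 - b3 + b4 - b5 - b6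
    + 2*c1 + c2 - c3 - c4 + c5 - c6 + c7 + p1 + p2 - p3 + p4 + p5 - p6
    + s1 + s2 - s3 - s4 + s5 + s6 + s7 - s8 + 4*s9 - 3*s10 + 2*k1 - 2*q1

/-- The Levi-Civita connection is Kähler: `D(Jv) = J(Dv)`. -/
lemma DJ (u v : X) : C.lc u (C.J v) = C.J (C.lc u v) := by
  apply eq_of_two_g C
  intro w
  rw [koszul]
  have h := K_J C u v w
  have hs : C.g (C.J (C.lc u v)) w = -C.g (C.lc u v) (C.J w) := gJ_skew C _ _
  have hk := koszul C u v (C.J w)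
  linear_combination h + hk - 2*hs

end CASK

namespace CASK

variable {F : Type u} {X : Type v} [CommRing F] [Algebra ℝ F]
  [AddCommGroup X] [Module F X] (C : CASK F X)

/-- The difference tensor `S = ∇ - D`. -/
def S (a b : X) : X := C.conn a b - C.lc a b

lemma conn_eq (a b : X) : C.conn a b = C.lc a b + C.S a b := by rw [S]; abel

lemma S_symm (a b : X) : C.S a b = C.S b a := by
  rw [S, S]
  have h1 := C.torsion_free a b
  have h2 := C.lc_torsion_free a b
  rw [← h2] at h1
  rw [sub_eq_sub_iff_sub_eq_sub]
  exact h1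

lemma S_addr (a b b' : X) : C.S a (b + b') = C.S a b + C.S a b' := by
  rw [S, S, S, C.conn_addr, lc_addr]; abel

lemma S_zeror (a : X) : C.S a 0 = 0 := by
  rw [S, conn_zeror, lc_zeror, sub_zero]

lemma S_negr (a b : X) : C.S a (-b) = -C.S a b := by
  rw [S, conn_negr, lc_negr, S]; abel

lemma S_subr (a b b' : X) : C.S a (b - b') = C.S a b - C.S a b' := by
  rw [sub_eq_add_neg, S_addr, S_negr, sub_eq_add_neg]

/-- `∇ω = 0`, `Dg = 0`, `DJ = 0` give: `g(J(S_u v), w) + g(Jv, S_u w) = 0`. -/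
lemma gS_omega (u v w : X) :
    C.g (C.J (C.S u v)) w + C.g (C.J v) (C.S u w) = 0 := by
  have h1 := C.conn_omega u v w
  have h2 := C.lc_metric u (C.J v) w
  rw [DJ] at h2
  have e1 : C.g (C.J (C.S u v)) w
      = C.g (C.J (C.conn u v)) w - C.g (C.J (C.lc u v)) w := by
    rw [S, J_sub, g_subl]
  have e2 : C.g (C.J v) (C.S u w)
      = C.g (C.J v) (C.conn u w) - C.g (C.J v) (C.lc u w) := by
    rw [S, g_subr]
  linear_combination e1 + e2 - h1 + h2

lemma cA (u v w : X) : C.g (C.S u v) (C.J w) = C.g (C.S u w) (C.J v) := by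
  have h := gS_omega C u v w
  have e1 : C.g (C.J (C.S u v)) w = -C.g (C.S u v) (C.J w) := gJ_skew C _ _
  have e2 : C.g (C.J v) (C.S u w) = C.g (C.S u w) (C.J v) := C.g_symm _ _
  linear_combination e1 + e2 - h

/-- `g(S_u v, w) = -g(S_u (Jw), Jv)`. -/
lemma cA' (u v w : X) : C.g (C.S u v) w = -C.g (C.S u (C.J w)) (C.J v) := by
  have h := cA C u v (-(C.J w))
  rw [J_neg, C.J_sq, neg_neg, S_negr, g_negl] at h
  linear_combination h

lemma S_J (u v : X) : C.S u (C.J v) = C.S (C.J u) v := by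
  have hP : ∀ a b : X, C.P a b = C.S a (C.J b) - C.J (C.S a b) := by
    intro a b
    rw [P, S, S, DJ, J_sub]
    abel
  have h := P_symm C u v
  rw [hP, hP, S_symm C v u] at h
  have h2 : C.S u (C.J v) = C.S v (C.J u) := sub_left_inj.mp h
  rw [h2, S_symm]

/-- Total symmetry of `c(u,v,w) = g(S_u v, w)` in the outer slots. -/
lemma c13 (u v w : X) : C.g (C.S u v) w = C.g (C.S w v) u := by
  calc C.g (C.S u v) w = -C.g (C.S u (C.J w)) (C.J v) := cA' C u v w
  _ = -C.g (C.S (C.J u) w) (C.J v) := by rw [S_J]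
  _ = -C.g (C.S w (C.J u)) (C.J v) := by rw [S_symm C (C.J u) w]
  _ = C.g (C.S w v) u := (cA' C w v u).symm

lemma c23 (u v w : X) : C.g (C.S u v) w = C.g (C.S u w) v := by
  calc C.g (C.S u v) w = C.g (C.S v u) w := by rw [S_symm C u v]
  _ = C.g (C.S w u) v := c13 C v u w
  _ = C.g (C.S u w) v := by rw [S_symm C w u]

/-- `S_u` anticommutes with `J`. -/
lemma SJ_anti (u v : X) : C.S u (C.J v) = -C.J (C.S u v) := by
  apply eq_of_g C
  intro w
  have e1 : C.g (C.S u (C.J v)) w = C.g (C.S u w) (C.J v) := c23 C u (C.J v) w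
  have e2 : C.g (-C.J (C.S u v)) w = -C.g (C.J (C.S u v)) w := g_negl C _ _
  have e3 : C.g (C.J (C.S u v)) w = -C.g (C.S u v) (C.J w) := gJ_skew C _ _
  have e4 : C.g (C.S u v) (C.J w) = C.g (C.S u w) (C.J v) := cA C u v w
  linear_combination e1 - e2 + e3 - e4

lemma S_xi (a : X) : C.S a C.xi = 0 := by
  rw [S, C.conn_xi, C.lc_xi, sub_self]

lemma S_xi_l (a : X) : C.S C.xi a = 0 := by rw [S_symm, S_xi]

lemma S_Jxi (a : X) : C.S a (C.J C.xi) = 0 := by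
  rw [SJ_anti, S_xi, J_zero, neg_zero]

lemma S_Jxi_l (a : X) : C.S (C.J C.xi) a = 0 := by rw [S_symm, S_Jxi]

lemma lc_Jxi (a : X) : C.lc a (C.J C.xi) = C.J a := by rw [DJ, C.lc_xi]

lemma J_inj0 (x : X) (h : C.J x = 0) : x = 0 := by
  have hs := C.J_sq x
  rw [h, J_zero] at hs
  exact neg_eq_zero.mp hs.symm

/-- `(D_u S)(v, w)`. -/
def T (u v w : X) : X :=
  C.lc u (C.S v w) - C.S (C.lc u v) w - C.S v (C.lc u w)

/-- First curvature-type quantity: `R^D(u,v)w + [S_u, S_v] w`. -/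
def Rq (u v w : X) : X :=
  C.lc u (C.lc v w) - C.lc v (C.lc u w) - C.lc (C.br u v) w
    + (C.S u (C.S v w) - C.S v (C.S u w))

/-- Antisymmetrised second derivative of `S`. -/
def Td (u v w : X) : X := C.T u v w - C.T v u w

/-- The flatness of `∇` splits into the two pieces. -/
lemma split (u v w : X) : C.Rq u v w + C.Td u v w = 0 := by
  have h := C.flat u v w
  have e1 : C.conn u (C.conn v w)
      = C.lc u (C.lc v w) + C.S u (C.lc v w) + C.lc u (C.S v w)
        + C.S u (C.S v w) := by
    rw [conn_eq C v w, C.conn_addr, conn_eq C u (C.lc v w),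
      conn_eq C u (C.S v w)]
    abel
  have e2 : C.conn v (C.conn u w)
      = C.lc v (C.lc u w) + C.S v (C.lc u w) + C.lc v (C.S u w)
        + C.S v (C.S u w) := by
    rw [conn_eq C u w, C.conn_addr, conn_eq C v (C.lc u w),
      conn_eq C v (C.S u w)]
    abel
  have e3 : C.conn (C.br u v) w
      = C.lc (C.br u v) w + C.S (C.lc u v) w - C.S (C.lc v u) w := by
    rw [conn_eq C (C.br u v) w, S_symm C (C.br u v) w, ← C.lc_torsion_free,
      S_subr, S_symm C w (C.lc u v), S_symm C w (C.lc v u)]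
    abel
  rw [e1, e2, e3] at h
  rw [Rq, Td, T, T]
  linear_combination (norm := abel) h

lemma Rq_J (u v w : X) : C.Rq u v (C.J w) = C.J (C.Rq u v w) := by
  simp only [Rq, DJ, SJ_anti, S_negr, neg_neg, lc_negr, J_sub, C.J_add]
  try abel

lemma Td_J (u v w : X) : C.Td u v (C.J w) = -C.J (C.Td u v w) := by
  simp only [Td, T, DJ, SJ_anti, S_negr, neg_neg, lc_negr, J_sub, C.J_add,
    J_neg]
  try abel

lemma Td_zero (u v w : X) : C.Td u v w = 0 := by
  have h1 := split C u v w
  have h2 := split C u v (C.J w)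
  rw [Rq_J, Td_J] at h2
  have h3 : C.J (C.Rq u v w - C.Td u v w) = 0 := by
    rw [J_sub]
    linear_combination (norm := abel) h2
  have h4 := J_inj0 C _ h3
  have h5 : C.Td u v w + C.Td u v w = 0 := by
    calc C.Td u v w + C.Td u v w
        = (C.Rq u v w + C.Td u v w) - (C.Rq u v w - C.Td u v w) := by abel
    _ = 0 - 0 := by rw [h1, h4]
    _ = 0 := by simp
  exact half_X C _ h5

lemma Rq_zero (u v w : X) : C.Rq u v w = 0 := by
  have h1 := split C u v w
  rw [Td_zero, add_zero] at h1
  exact h1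

end CASK

/-- On a CASK manifold, the Riemann curvature tensor of the Levi-Civita
connection vanishes whenever `ξ` or `Jξ` is inserted in any slot. -/
theorem curvature_vanishes_on_xi {F : Type u} {X : Type v} [CommRing F]
    [Algebra ℝ F] [AddCommGroup X] [Module F X] (C : CASK F X) :
    ∀ u v : X,
      (C.lc C.xi (C.lc u v) - C.lc u (C.lc C.xi v) - C.lc (C.br C.xi u) v = 0) ∧
      (C.lc u (C.lc C.xi v) - C.lc C.xi (C.lc u v) - C.lc (C.br u C.xi) v = 0) ∧
      (C.lc u (C.lc v C.xi) - C.lc v (C.lc u C.xi) - C.lc (C.br u v) C.xi = 0) ∧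
      (C.lc (C.J C.xi) (C.lc u v) - C.lc u (C.lc (C.J C.xi) v)
        - C.lc (C.br (C.J C.xi) u) v = 0) ∧
      (C.lc u (C.lc (C.J C.xi) v) - C.lc (C.J C.xi) (C.lc u v)
        - C.lc (C.br u (C.J C.xi)) v = 0) ∧
      (C.lc u (C.lc v (C.J C.xi)) - C.lc v (C.lc u (C.J C.xi))
        - C.lc (C.br u v) (C.J C.xi) = 0) := by
  intro u v
  refine ⟨?_, ?_, ?_, ?_, ?_, ?_⟩
  · have h := C.Rq_zero C.xi u v
    simp only [CASK.Rq, CASK.S_xi_l, CASK.S_zeror, sub_zero, add_zero] at h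
    exact h
  · have h := C.Rq_zero u C.xi v
    simp only [CASK.Rq, CASK.S_xi_l, CASK.S_zeror, zero_sub, sub_zero,
      add_zero, neg_zero, sub_self] at h
    exact h
  · rw [C.lc_xi, C.lc_xi, C.lc_xi, C.lc_torsion_free, sub_self]
  · have h := C.Rq_zero (C.J C.xi) u v
    simp only [CASK.Rq, CASK.S_Jxi_l, CASK.S_zeror, sub_zero, add_zero] at h
    exact h
  · have h := C.Rq_zero u (C.J C.xi) v
    simp only [CASK.Rq, CASK.S_Jxi_l, CASK.S_zeror, zero_sub, sub_zero,
      add_zero, neg_zero, sub_self] at h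
    exact h
  · rw [C.lc_Jxi, C.lc_Jxi, C.lc_Jxi, C.DJ, C.DJ, ← C.J_sub, ← C.J_sub,
      C.lc_torsion_free, sub_self, C.J_zero]
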